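/- arXiv:1502.03372 — 5 statements merged into one kernel-verified Lean document; each statement's English description precedes it below -/
import Mathlib

section
/- Let x* optimize max{∑_j w_j x_j^{1−α}/(1−α) : Ax ≤ 1, x ≥ 0} and let z* optimize the LP max{∑_j w_j z_j : Az ≤ 1, z ≥ 0}, with the same nonnegative matrix A whose nonzero entries lie in [1, A_max] and the same positive weights w. If ε ∈ (0, 1/6] and 0 < α ≤ (ε/4)/ln(n A_max / ε), then ∑_j w_j z*_j ≥ (1 − 3ε) ∑_j w_j (x*_j)^{1−α}/(1−α). -/
open Real

set_option maxHeartbeats 1000000 in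
/-- For very small α, the LP optimum 3ε-approximates the α-fair optimum. -/
theorem stmt_7 (m n : ℕ) (A : Fin m → Fin n → ℝ) (Amax : ℝ)
    (hA : ∀ i j, 0 ≤ A i j)
    (hA1 : ∀ i j, A i j ≠ 0 → 1 ≤ A i j ∧ A i j ≤ Amax)
    (w : Fin n → ℝ) (hw : ∀ j, 0 < w j)
    (ε α : ℝ) (hε0 : 0 < ε) (hε6 : ε ≤ 1 / 6)
    (hα0 : 0 < α) (hαub : α ≤ (ε / 4) / Real.log ((n : ℝ) * Amax / ε))
    (xs : Fin n → ℝ)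
    (hxfeas : (∀ i, ∑ j, A i j * xs j ≤ 1) ∧ (∀ j, 0 ≤ xs j))
    (hxopt : ∀ x : Fin n → ℝ, (∀ i, ∑ j, A i j * x j ≤ 1) → (∀ j, 0 ≤ x j) →
      ∑ j, w j * x j ^ (1 - α) / (1 - α) ≤ ∑ j, w j * xs j ^ (1 - α) / (1 - α))
    (zs : Fin n → ℝ)
    (hzfeas : (∀ i, ∑ j, A i j * zs j ≤ 1) ∧ (∀ j, 0 ≤ zs j))
    (hzopt : ∀ z : Fin n → ℝ, (∀ i, ∑ j, A i j * z j ≤ 1) → (∀ j, 0 ≤ z j) →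
      ∑ j, w j * z j ≤ ∑ j, w j * zs j) :
    ∑ j, w j * zs j ≥ (1 - 3 * ε) * ∑ j, w j * xs j ^ (1 - α) / (1 - α) := by
  -- trivial case n = 0
  rcases Nat.eq_zero_or_pos n with hn | hn
  · subst hn
    simp
  -- L := log (n * Amax / ε) is positive
  set L : ℝ := Real.log ((n : ℝ) * Amax / ε) with hL
  have hLpos : 0 < L := by
    by_contra h
    push_neg at h
    rcases lt_or_eq_of_le h with h' | h'
    · have : (ε / 4) / L < 0 := div_neg_of_pos_of_neg (by linarith) h'
      linarith
    · rw [h'] at hαub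
      simp at hαub
      linarith
  have hαL : α * L ≤ ε / 4 := by
    rw [le_div_iff₀ hLpos] at hαub
    exact hαub
  -- every column of A has a nonzero entry (else hzopt is contradicted)
  have hcol : ∀ j, ∃ i, A i j ≠ 0 := by
    intro j
    by_contra h
    push_neg at h
    set z : Fin n → ℝ := Function.update zs j (zs j + 1) with hz
    have hzf : ∀ i, ∑ k, A i k * z k ≤ 1 := by
      intro i
      have : ∑ k, A i k * z k = ∑ k, A i k * zs k := by
        apply Finset.sum_congr rfl
        intro k _
        rcases eq_or_ne k j with rfl | hk
        · rw [h i]; ring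
        · rw [hz, Function.update_of_ne hk]
      rw [this]; exact hzfeas.1 i
    have hznn : ∀ k, 0 ≤ z k := by
      intro k
      rcases eq_or_ne k j with rfl | hk
      · rw [hz, Function.update_self]; have := hzfeas.2 k; linarith
      · rw [hz, Function.update_of_ne hk]; exact hzfeas.2 k
    have hlt : ∑ k, w k * zs k < ∑ k, w k * z k := by
      apply Finset.sum_lt_sum
      · intro k _
        rcases eq_or_ne k j with rfl | hk
        · rw [hz, Function.update_self]
          have := (hw k).le
          nlinarith
        · rw [hz, Function.update_of_ne hk]
      · exact ⟨j, Finset.mem_univ j, by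
          rw [hz, Function.update_self]
          have := hw j
          nlinarith⟩
    have := hzopt z hzf hznn
    linarith
  -- Amax ≥ 1
  have hAmax1 : 1 ≤ Amax := by
    obtain ⟨i, hi⟩ := hcol ⟨0, hn⟩
    have := hA1 i ⟨0, hn⟩ hi
    linarith
  have hAmax0 : 0 < Amax := by linarith
  -- L ≥ 1
  have hL1 : 1 ≤ L := by
    have h6 : (6 : ℝ) ≤ (n : ℝ) * Amax / ε := by
      have hn1 : (1 : ℝ) ≤ (n : ℝ) := by exact_mod_cast hn
      rw [le_div_iff₀ hε0]
      nlinarith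
    have : (1 : ℝ) < Real.log 6 := by
      rw [Real.lt_log_iff_exp_lt (by norm_num)]
      have := Real.exp_one_lt_d9
      linarith
    have hmono : Real.log 6 ≤ L := Real.log_le_log (by norm_num) h6
    linarith
  have hαε4 : α ≤ ε / 4 := by nlinarith
  have h1α : 0 < 1 - α := by linarith
  -- upper bounds on A entries
  have hAub : ∀ i j, A i j ≤ Amax := by
    intro i j
    rcases eq_or_ne (A i j) 0 with h | h
    · rw [h]; linarith
    · exact (hA1 i j h).2
  -- V := LP value; V ≥ w j / Amax for each j
  set V : ℝ := ∑ j, w j * zs j with hV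
  have hVj : ∀ j, w j / Amax ≤ V := by
    intro j
    set z : Fin n → ℝ := fun k => if k = j then Amax⁻¹ else 0 with hz
    have hzf : ∀ i, ∑ k, A i k * z k ≤ 1 := by
      intro i
      have : ∑ k, A i k * z k = A i j * Amax⁻¹ := by
        rw [Finset.sum_eq_single j]
        · simp [hz]
        · intro k _ hk; simp [hz, hk]
        · intro h; exact absurd (Finset.mem_univ j) h
      rw [this]
      rw [mul_inv_le_iff₀ hAmax0]
      simpa using hAub i j
    have hznn : ∀ k, 0 ≤ z k := by
      intro k
      rcases eq_or_ne k j with rfl | hk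
      · simp [hz]; positivity
      · simp [hz, hk]
    have := hzopt z hzf hznn
    have heq : ∑ k, w k * z k = w j * Amax⁻¹ := by
      rw [Finset.sum_eq_single j]
      · simp [hz]
      · intro k _ hk; simp [hz, hk]
      · intro h; exact absurd (Finset.mem_univ j) h
    rw [heq] at this
    rw [div_eq_mul_inv]
    exact this
  have hVpos : 0 < V := lt_of_lt_of_le (div_pos (hw ⟨0, hn⟩) hAmax0) (hVj ⟨0, hn⟩)
  -- sum of weights bounded by n * Amax * V
  obtain ⟨j0, _, hj0⟩ := Finset.exists_max_image Finset.univ w ⟨⟨0, hn⟩, Finset.mem_univ _⟩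
  have hwsum : ∑ j, w j ≤ (n : ℝ) * Amax * V := by
    have h1 : ∑ j, w j ≤ (n : ℝ) * w j0 := by
      have := Finset.sum_le_card_nsmul Finset.univ w (w j0) (fun x _ => hj0 x (Finset.mem_univ x))
      simpa [Finset.card_univ, nsmul_eq_mul] using this
    have h2 : w j0 ≤ Amax * V := by
      have := hVj j0
      rw [div_le_iff₀ hAmax0] at this
      linarith [mul_comm V Amax ▸ this]
    have hn0 : (0 : ℝ) < (n : ℝ) := by exact_mod_cast hn
    nlinarith
  -- δ and E
  set δ : ℝ := ε / ((n : ℝ) * Amax) with hδ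
  have hnA : 0 < (n : ℝ) * Amax := by
    have : (0 : ℝ) < (n : ℝ) := by exact_mod_cast hn
    positivity
  have hδpos : 0 < δ := div_pos hε0 hnA
  set E : ℝ := Real.exp (ε / 4) with hE
  have hEpos : 0 < E := Real.exp_pos _
  have hE1 : 1 ≤ E := Real.one_le_exp (by linarith)
  -- δ ^ (-α) ≤ E
  have hδE : δ ^ (-α) ≤ E := by
    have hδinv : δ⁻¹ = (n : ℝ) * Amax / ε := by
      rw [hδ, inv_div]
    have : δ ^ (-α) = Real.exp (α * L) := by
      rw [Real.rpow_def_of_pos hδpos]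
      congr 1
      rw [hL, ← hδinv, Real.log_inv]
      ring
    rw [this]
    exact Real.exp_le_exp.mpr hαL
  -- key pointwise bound
  have hkey : ∀ j, xs j ^ (1 - α) ≤ E * (xs j + δ) := by
    intro j
    have hxj := hxfeas.2 j
    rcases le_or_gt (xs j) δ with h | h
    · have h1 : xs j ^ (1 - α) ≤ δ ^ (1 - α) := Real.rpow_le_rpow hxj h (by linarith)
      have h2 : δ ^ (1 - α) = δ * δ ^ (-α) := by
        rw [sub_eq_add_neg, Real.rpow_add hδpos, Real.rpow_one]
      have h3 : δ * δ ^ (-α) ≤ δ * E := by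
        apply mul_le_mul_of_nonneg_left hδE hδpos.le
      nlinarith
    · have hxpos : 0 < xs j := lt_trans hδpos h
      have h1 : xs j ^ (1 - α) = xs j * xs j ^ (-α) := by
        rw [sub_eq_add_neg, Real.rpow_add hxpos, Real.rpow_one]
      have h2 : xs j ^ (-α) ≤ δ ^ (-α) :=
        Real.rpow_le_rpow_of_nonpos hδpos h.le (by linarith)
      have h3 : xs j * xs j ^ (-α) ≤ xs j * E :=
        mul_le_mul_of_nonneg_left (le_trans h2 hδE) hxpos.le
      nlinarith
  -- S := fair value numerator
  set S : ℝ := ∑ j, w j * xs j ^ (1 - α) with hS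
  have hSb : S ≤ E * (1 + ε) * V := by
    have h1 : S ≤ ∑ j, (E * (w j * xs j) + (E * δ) * w j) := by
      apply Finset.sum_le_sum
      intro j _
      have := hkey j
      have hwj := (hw j).le
      nlinarith
    have h2 : ∑ j, (E * (w j * xs j) + (E * δ) * w j)
        = E * (∑ j, w j * xs j) + (E * δ) * (∑ j, w j) := by
      rw [Finset.sum_add_distrib, ← Finset.mul_sum, ← Finset.mul_sum]
    have h3 : ∑ j, w j * xs j ≤ V := hzopt xs hxfeas.1 hxfeas.2
    have hδmul : δ * ((n : ℝ) * Amax) = ε := by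
      rw [hδ, div_mul_cancel₀ _ (ne_of_gt hnA)]
    have h4 : δ * (∑ j, w j) ≤ ε * V := by
      calc δ * (∑ j, w j) ≤ δ * ((n : ℝ) * Amax * V) :=
            mul_le_mul_of_nonneg_left hwsum hδpos.le
        _ = (δ * ((n : ℝ) * Amax)) * V := by ring
        _ = ε * V := by rw [hδmul]
    calc S ≤ E * (∑ j, w j * xs j) + (E * δ) * (∑ j, w j) := by rw [← h2]; exact h1
      _ ≤ E * V + E * (ε * V) := by
          have h3' := mul_le_mul_of_nonneg_left h3 hEpos.le
          have h4' : E * (δ * (∑ j, w j)) ≤ E * (ε * V) :=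
            mul_le_mul_of_nonneg_left h4 hEpos.le
          have heq : (E * δ) * (∑ j, w j) = E * (δ * (∑ j, w j)) := by ring
          linarith
      _ = E * (1 + ε) * V := by ring
  -- final inequality
  have hEub : E * (1 - ε / 4) ≤ 1 := by
    have h := Real.add_one_le_exp (-(ε / 4))
    have : Real.exp (-(ε/4)) * E = 1 := by
      rw [hE, ← Real.exp_add]; norm_num
    nlinarith [Real.exp_pos (-(ε/4))]
  have hfinal : (1 - 3 * ε) * (1 + ε) * E ≤ 1 - α := by
    have h1 : (1 - 3 * ε) * (1 + ε) ≤ (1 - ε / 4) ^ 2 := by nlinarith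
    have h2 : (1 - 3 * ε) * (1 + ε) * E ≤ (1 - ε / 4) ^ 2 * E := by
      apply mul_le_mul_of_nonneg_right h1 hEpos.le
    have h3 : (1 - ε / 4) ^ 2 * E = (1 - ε / 4) * (E * (1 - ε / 4)) := by ring
    have h4 : (1 - ε / 4) * (E * (1 - ε / 4)) ≤ (1 - ε / 4) * 1 := by
      apply mul_le_mul_of_nonneg_left hEub (by linarith)
    nlinarith
  have hSnn : 0 ≤ S := Finset.sum_nonneg fun j _ => by
    have := Real.rpow_nonneg (hxfeas.2 j) (1 - α)
    have := (hw j).le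
    positivity
  have hgoal : (1 - 3 * ε) * S ≤ V * (1 - α) := by
    have h13 : (0 : ℝ) ≤ 1 - 3 * ε := by linarith
    calc (1 - 3 * ε) * S ≤ (1 - 3 * ε) * (E * (1 + ε) * V) :=
          mul_le_mul_of_nonneg_left hSb h13
      _ = ((1 - 3 * ε) * (1 + ε) * E) * V := by ring
      _ ≤ (1 - α) * V := mul_le_mul_of_nonneg_right hfinal hVpos.le
      _ = V * (1 - α) := by ring
  have hsum_div : ∑ j, w j * xs j ^ (1 - α) / (1 - α) = S / (1 - α) := by
    rw [hS, Finset.sum_div]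
  rw [ge_iff_le, hsum_div, mul_div_assoc', div_le_iff₀ h1α]
  exact hgoal
end

section
/- Let α > 1, 0 < ε and εα ≤ 9/10, let γ = ε/4, and define r_α(ξ) = 1 + (1 + 3ε)(α − 1)ξ − α ξ^{(α−1)/α}. Then for every ξ ∈ (1 − γ, 1 + γ), r_α(ξ) ≤ ε(3α − 2). -/
open Real

/-- Polynomial core inequality. -/
lemma stmt_11_poly (α ε d : ℝ) (hα : 1 < α) (hε0 : 0 < ε) (hεα : ε * α ≤ 9 / 10)
    (hd1 : -(ε / 4) < d) (hd2 : d < ε / 4) :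
    (α - 1) * d ^ 2 ≤ ε * (α + d) * (1 - 3 * (α - 1) * d) := by
  have hεs : ε < 9 / 10 := by nlinarith
  have hdsq : d ^ 2 ≤ (ε / 4) ^ 2 := by nlinarith
  have h1 : ε * (α - 1) ≤ 9 / 10 - ε := by nlinarith
  have h2 : (α - 1) * d ^ 2 ≤ 9 / 160 * ε := by nlinarith [mul_le_mul_of_nonneg_left hdsq (le_of_lt (sub_pos.2 hα)), sq_nonneg d]
  have h3 : 3 * (α - 1) * d ≤ 27 / 40 := by nlinarith
  have h4 : 31 / 40 ≤ α + d := by nlinarith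
  have h5 : 13 / 40 ≤ 1 - 3 * (α - 1) * d := by nlinarith
  nlinarith [mul_le_mul h4 h5 (by norm_num) (by linarith), mul_pos hε0 hε0]

/-- For α > 1, εα ≤ 9/10, γ = ε/4:
r_α(ξ) = 1 + (1+3ε)(α-1)ξ - α ξ^((α-1)/α) ≤ ε(3α-2) on (1-γ, 1+γ). -/
theorem stmt_11 (α ε γ : ℝ) (hα : 1 < α) (hε0 : 0 < ε) (hεα : ε * α ≤ 9 / 10)
    (hγ : γ = ε / 4) :
    ∀ ξ : ℝ, 1 - γ < ξ → ξ < 1 + γ →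
      1 + (1 + 3 * ε) * (α - 1) * ξ - α * ξ ^ ((α - 1) / α) ≤ ε * (3 * α - 2) := by
  intro ξ h1 h2
  have hα0 : 0 < α := by linarith
  have hεs : ε < 9 / 10 := by nlinarith
  set d : ℝ := ξ - 1 with hd
  have hd1 : -(ε / 4) < d := by simp [hd, hγ] at h1 ⊢; linarith
  have hd2 : d < ε / 4 := by simp [hd, hγ] at h2 ⊢; linarith
  have hξ0 : 0 < ξ := by nlinarith
  -- Bernoulli: ξ^(1/α) ≤ 1 + d/α
  have hbern : ξ ^ (1 / α) ≤ 1 + (1 / α) * d := by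
    have := rpow_one_add_le_one_add_mul_self (s := d) (by nlinarith : (-1:ℝ) ≤ d)
      (p := 1 / α) (by positivity) (by rw [div_le_one hα0]; linarith)
    simpa [hd] using this
  set B : ℝ := ξ ^ ((α - 1) / α) with hB
  have hB0 : 0 < B := rpow_pos_of_pos hξ0 _
  have hsplit : ξ ^ (1 / α) * B = ξ := by
    rw [hB, ← rpow_add hξ0]
    have : 1 / α + (α - 1) / α = 1 := by field_simp; ring
    rw [this, rpow_one]
  have hkey : α * ξ ≤ (α + d) * B := by
    have h5 : ξ ≤ (1 + (1 / α) * d) * B := by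
      rw [← hsplit]
      exact mul_le_mul_of_nonneg_right hbern hB0.le
    have : α * ξ ≤ α * ((1 + (1 / α) * d) * B) := by
      exact mul_le_mul_of_nonneg_left h5 hα0.le
    calc α * ξ ≤ α * ((1 + (1 / α) * d) * B) := this
      _ = (α + d) * B := by field_simp
  have hpoly := stmt_11_poly α ε d hα hε0 hεα hd1 hd2
  have hαd : 0 < α + d := by nlinarith
  -- multiply goal by (α + d)
  have hmain : (α + d) * (1 + (1 + 3 * ε) * (α - 1) * ξ - ε * (3 * α - 2)) ≤ α * (α * ξ) := by
    have hξd : ξ = 1 + d := by simp [hd]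
    rw [hξd]; nlinarith [hpoly]
  have := mul_le_mul_of_nonneg_left hkey hα0.le
  nlinarith [mul_le_mul_of_nonneg_left hkey hα0.le, hmain, mul_pos hαd hB0]
end

section
/- Fix δ_j > 0 with δ_j ≤ 1 for each j, C = w_j/δ_j^α for all j (assumed consistent), κ > 0, and dual variables y_i(x) = C · exp(κ(∑_j A_{ij} x_j − 1)). Suppose x ≥ 0 with x_j ≥ δ_j for all j, and suppose some constraint k satisfies ∑_j A_{kj} x_j > 1 and A_{kj} ≥ 1 for some j. Then x_j^α ∑_{i=1}^m y_i(x) A_{ij} ≥ x_j^α y_k(x) A_{kj} > w_j; in particular, x_j^α ∑_i y_i(x) A_{ij} > w_j(1 − γ) for any γ ∈ (0,1), so no variable appearing in a violated constraint satisfies the increase condition x_j^α ∑_i y_i(x) A_{ij} ≤ w_j(1 − γ). -/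
open Real

/-- If constraint k is violated, then for every variable x_j appearing in constraint k
the KKT quantity x_j^α ∑_i y_i(x) A_{ij} exceeds w_j, so x_j does not satisfy the
increase condition x_j^α ∑_i y_i(x) A_{ij} ≤ w_j(1-γ). -/
theorem stmt_17 (m n : ℕ) (A : Fin m → Fin n → ℝ)
    (hA : ∀ i j, 0 ≤ A i j) (hA1 : ∀ i j, A i j ≠ 0 → 1 ≤ A i j)
    (w : Fin n → ℝ) (hw : ∀ j, 0 < w j)
    (α : ℝ) (hα : 0 < α)
    (δ : Fin n → ℝ) (hδ0 : ∀ j, 0 < δ j) (hδ1 : ∀ j, δ j ≤ 1)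
    (C : ℝ) (hC : ∀ j, C = w j / δ j ^ α)
    (κ : ℝ) (hκ : 0 < κ)
    (x : Fin n → ℝ) (hx0 : ∀ j, 0 ≤ x j) (hxδ : ∀ j, δ j ≤ x j)
    (k : Fin m) (hk : 1 < ∑ j, A k j * x j)
    (j : Fin n) (hkj : A k j ≠ 0) :
    x j ^ α * ∑ i, (C * Real.exp (κ * (∑ j', A i j' * x j' - 1))) * A i j
      ≥ x j ^ α * (C * Real.exp (κ * (∑ j', A k j' * x j' - 1))) * A k j ∧
    x j ^ α * (C * Real.exp (κ * (∑ j', A k j' * x j' - 1))) * A k j > w j ∧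
    ∀ γ : ℝ, 0 < γ → γ < 1 →
      x j ^ α * ∑ i, (C * Real.exp (κ * (∑ j', A i j' * x j' - 1))) * A i j
        > w j * (1 - γ) := by
  have hCpos : 0 < C := by
    rw [hC j]; exact div_pos (hw j) (Real.rpow_pos_of_pos (hδ0 j) α)
  have hxj : 0 < x j := lt_of_lt_of_le (hδ0 j) (hxδ j)
  have hxpow : δ j ^ α ≤ x j ^ α :=
    Real.rpow_le_rpow (le_of_lt (hδ0 j)) (hxδ j) hα.le
  have hpow : 0 < x j ^ α := Real.rpow_pos_of_pos hxj α
  have hterm : ∀ i : Fin m,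
      0 ≤ (C * Real.exp (κ * (∑ j', A i j' * x j' - 1))) * A i j := by
    intro i
    exact mul_nonneg (mul_nonneg hCpos.le (Real.exp_pos _).le) (hA i j)
  have hge : x j ^ α * ∑ i, (C * Real.exp (κ * (∑ j', A i j' * x j' - 1))) * A i j
      ≥ x j ^ α * (C * Real.exp (κ * (∑ j', A k j' * x j' - 1))) * A k j := by
    rw [ge_iff_le, mul_assoc]
    refine mul_le_mul_of_nonneg_left ?_ hpow.le
    exact Finset.single_le_sum (fun i _ => hterm i) (Finset.mem_univ k)
  set E := Real.exp (κ * (∑ j', A k j' * x j' - 1)) with hE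
  have hEpos : 0 < E := Real.exp_pos _
  have hE1 : 1 < E := by
    calc (1:ℝ) = Real.exp 0 := Real.exp_zero.symm
      _ < E := Real.exp_lt_exp.mpr (by nlinarith)
  have hAkj : 1 ≤ A k j := hA1 k j hkj
  have hCx : w j ≤ C * x j ^ α := by
    rw [hC j, div_mul_eq_mul_div, le_div_iff₀ (Real.rpow_pos_of_pos (hδ0 j) α)]
    exact mul_le_mul_of_nonneg_left hxpow (hw j).le
  have hgt : x j ^ α * (C * E) * A k j > w j := by
    calc w j ≤ C * x j ^ α := hCx
      _ < C * x j ^ α * E := by nlinarith [mul_pos hCpos hpow]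
      _ = x j ^ α * (C * E) * 1 := by ring
      _ ≤ x j ^ α * (C * E) * A k j := by
          apply mul_le_mul_of_nonneg_left hAkj
          positivity
  refine ⟨hge, hgt, fun γ hγ0 hγ1 => ?_⟩
  have : w j * (1 - γ) < w j := by nlinarith [hw j]
  linarith [hge, hgt]
end

section
/- Let y_i(x) = C·e^{κ(∑_j A_{ij} x_j − 1)} with C > 0, κ = (1/ε)·ln(C m A_max/(ε w_min)) where C m A_max/(ε w_min) > 1, and suppose x is feasible (Ax ≤ 1, x ≥ 0, x_j ≤ 1 for all j) with max_i ∑_j A_{ij} x_j < 1 − ε for some ε ∈ (0, 1). Then for every i, y_i(x) ≤ ε w_min/(m A_max), and consequently for every j, x_j^α ∑_{i=1}^m y_i(x) A_{ij} ≤ ε w_j ≤ w_j(1 − γ) for any γ ≤ 1 − ε. -/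
open Real

/-- If all constraints have slack at least ε, then all dual variables are tiny,
and every variable satisfies the increase condition. -/
theorem stmt_18 (m n : ℕ) (A : Fin m → Fin n → ℝ) (Amax : ℝ)
    (hA : ∀ i j, 0 ≤ A i j) (hAmax : ∀ i j, A i j ≤ Amax)
    (w : Fin n → ℝ) (wmin : ℝ) (hwmin : 0 < wmin) (hw : ∀ j, wmin ≤ w j)
    (α : ℝ) (hα : 0 < α)
    (ε : ℝ) (hε0 : 0 < ε) (hε1 : ε < 1)
    (C : ℝ) (hC : 0 < C) (hbig : 1 < C * (m : ℝ) * Amax / (ε * wmin))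
    (κ : ℝ) (hκ : κ = (1 / ε) * Real.log (C * (m : ℝ) * Amax / (ε * wmin)))
    (x : Fin n → ℝ) (hx0 : ∀ j, 0 ≤ x j) (hx1 : ∀ j, x j ≤ 1)
    (hslack : ∀ i, ∑ j, A i j * x j < 1 - ε) :
    (∀ i : Fin m, C * Real.exp (κ * (∑ j, A i j * x j - 1)) ≤ ε * wmin / ((m : ℝ) * Amax)) ∧
    (∀ j : Fin n,
      x j ^ α * ∑ i, (C * Real.exp (κ * (∑ j', A i j' * x j' - 1))) * A i j ≤ ε * w j ∧
      ∀ γ : ℝ, γ ≤ 1 - ε →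
        x j ^ α * ∑ i, (C * Real.exp (κ * (∑ j', A i j' * x j' - 1))) * A i j
          ≤ w j * (1 - γ)) := by
  have hεw : 0 < ε * wmin := mul_pos hε0 hwmin
  have hCmA : ε * wmin < C * (m : ℝ) * Amax := (one_lt_div hεw).mp hbig
  have hmA : 0 < (m : ℝ) * Amax := by
    rcases lt_or_ge 0 ((m : ℝ) * Amax) with h | h
    · exact h
    · exfalso; nlinarith [mul_nonneg hC.le (neg_nonneg.mpr h)]
  have hm : 0 < (m : ℝ) := by
    rcases lt_or_ge 0 ((m : ℝ)) with h | h
    · exact h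
    · exfalso
      have : (m : ℝ) = 0 := le_antisymm h (Nat.cast_nonneg m)
      rw [this] at hmA; simp at hmA
  have hAm : 0 < Amax := by nlinarith
  have hR : 0 < C * (m : ℝ) * Amax / (ε * wmin) := div_pos (by nlinarith) hεw
  have hκpos : 0 < κ := by
    rw [hκ]
    exact mul_pos (by positivity) (Real.log_pos hbig)
  have hκε : κ * ε = Real.log (C * (m : ℝ) * Amax / (ε * wmin)) := by
    rw [hκ]; field_simp
  have part1 : ∀ i : Fin m,
      C * Real.exp (κ * (∑ j, A i j * x j - 1)) ≤ ε * wmin / ((m : ℝ) * Amax) := by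
    intro i
    have hS := hslack i
    have h1 : κ * (∑ j, A i j * x j - 1) ≤
        -Real.log (C * (m : ℝ) * Amax / (ε * wmin)) := by
      have h2 : κ * (∑ j, A i j * x j - 1) ≤ κ * (-ε) :=
        mul_le_mul_of_nonneg_left (by linarith) hκpos.le
      have h3 : κ * (-ε) = -(κ * ε) := by ring
      linarith [hκε, h2, h3.le]
    have h2 : Real.exp (κ * (∑ j, A i j * x j - 1)) ≤
        (C * (m : ℝ) * Amax / (ε * wmin))⁻¹ := by
      calc Real.exp (κ * (∑ j, A i j * x j - 1))
          ≤ Real.exp (-Real.log (C * (m : ℝ) * Amax / (ε * wmin))) :=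
            Real.exp_le_exp.mpr h1
        _ = (C * (m : ℝ) * Amax / (ε * wmin))⁻¹ := by
            rw [Real.exp_neg, Real.exp_log hR]
    calc C * Real.exp (κ * (∑ j, A i j * x j - 1))
        ≤ C * (C * (m : ℝ) * Amax / (ε * wmin))⁻¹ :=
          mul_le_mul_of_nonneg_left h2 hC.le
      _ = ε * wmin / ((m : ℝ) * Amax) := by
          field_simp
  refine ⟨part1, fun j => ?_⟩
  have hxα : x j ^ α ≤ 1 := Real.rpow_le_one (hx0 j) (hx1 j) hα.le
  have hxα0 : 0 ≤ x j ^ α := Real.rpow_nonneg (hx0 j) α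
  have hsum0 : 0 ≤ ∑ i, (C * Real.exp (κ * (∑ j', A i j' * x j' - 1))) * A i j :=
    Finset.sum_nonneg fun i _ => mul_nonneg (by positivity) (hA i j)
  have hsum : (∑ i, (C * Real.exp (κ * (∑ j', A i j' * x j' - 1))) * A i j) ≤ ε * wmin := by
    calc (∑ i, (C * Real.exp (κ * (∑ j', A i j' * x j' - 1))) * A i j)
        ≤ ∑ _i : Fin m, (ε * wmin / ((m : ℝ) * Amax)) * Amax := by
          apply Finset.sum_le_sum
          intro i _
          exact mul_le_mul (part1 i) (hAmax i j) (hA i j) (by positivity)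
      _ = (m : ℝ) * ((ε * wmin / ((m : ℝ) * Amax)) * Amax) := by
          simp [Finset.sum_const, Finset.card_univ]
      _ = ε * wmin := by field_simp
  have hmain : x j ^ α * ∑ i, (C * Real.exp (κ * (∑ j', A i j' * x j' - 1))) * A i j
      ≤ ε * w j := by
    have h1 : x j ^ α * (∑ i, (C * Real.exp (κ * (∑ j', A i j' * x j' - 1))) * A i j)
        ≤ 1 * (∑ i, (C * Real.exp (κ * (∑ j', A i j' * x j' - 1))) * A i j) :=
      mul_le_mul_of_nonneg_right hxα hsum0
    have h2 : ε * wmin ≤ ε * w j := mul_le_mul_of_nonneg_left (hw j) hε0.le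
    linarith
  refine ⟨hmain, fun γ hγ => ?_⟩
  have hwj : 0 < w j := lt_of_lt_of_le hwmin (hw j)
  nlinarith [mul_le_mul_of_nonneg_left (show ε ≤ 1 - γ by linarith) hwj.le]
end

section
/- Let S ⊆ {1,…,m} and suppose y_i ≥ 0 satisfy: (a) y_i ≤ 1.2(ε/m)·max_k y_k for all i ∈ S, and (b) ∑_j A_{ij} x_j ≥ 1 − 1.2ε for all i ∉ S, where x ≥ 0, A ≥ 0, ε ∈ (0, 1/6]. Then ∑_{i=1}^m y_i ≤ (1 + 3ε) ∑_{j=1}^n x_j ∑_{i=1}^m y_i A_{ij}. -/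
open Real

/-- Approximate complementary slackness in aggregate: if the constraints outside S
are nearly tight and the dual variables in S are small relative to the largest dual
variable, then ∑_i y_i ≤ (1+3ε) ∑_j x_j ∑_i y_i A_{ij}. -/
theorem stmt_19 (m n : ℕ) (S : Finset (Fin m))
    (y : Fin m → ℝ) (hy : ∀ i, 0 ≤ y i)
    (x : Fin n → ℝ) (hx : ∀ j, 0 ≤ x j)
    (A : Fin m → Fin n → ℝ) (hA : ∀ i j, 0 ≤ A i j)
    (ε : ℝ) (hε0 : 0 < ε) (hε6 : ε ≤ 1 / 6)
    (ha : ∀ i ∈ S, y i ≤ 1.2 * (ε / (m : ℝ)) * ⨆ k, y k)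
    (hb : ∀ i ∉ S, 1 - 1.2 * ε ≤ ∑ j, A i j * x j) :
    ∑ i, y i ≤ (1 + 3 * ε) * ∑ j, x j * ∑ i, y i * A i j := by
  rcases Nat.eq_zero_or_pos m with hm | hm
  · subst hm; simp
  have hne : Nonempty (Fin m) := ⟨⟨0, hm⟩⟩
  obtain ⟨i0, hi0⟩ := Finite.exists_max y
  have hMsup : (⨆ k, y k) = y i0 :=
    le_antisymm (ciSup_le hi0) (le_ciSup (Set.finite_range y).bddAbove i0)
  have hM0 : 0 ≤ y i0 := hy i0
  have hmR : (0:ℝ) < (m:ℝ) := by exact_mod_cast hm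
  have hcomm : ∑ j, x j * ∑ i, y i * A i j = ∑ i, y i * ∑ j, A i j * x j := by
    simp_rw [Finset.mul_sum]
    rw [Finset.sum_comm]
    congr 1; ext i; congr 1; ext j; ring
  rw [hcomm]
  by_cases hcase : i0 ∈ S
  · have h1 := ha i0 hcase
    rw [hMsup] at h1
    have hεm : 1.2 * (ε / m) ≤ 0.2 := by
      have h2 : ε / m ≤ ε := div_le_self hε0.le (by exact_mod_cast hm)
      nlinarith
    have hMle : y i0 ≤ 0 := by nlinarith
    have hall : ∀ i, y i = 0 := fun i =>
      le_antisymm (le_trans (hi0 i) hMle) (hy i)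
    simp [hall]
  · -- the max is attained outside S
    have hsplit : ∑ i, y i = ∑ i ∈ S, y i + ∑ i ∈ Sᶜ, y i :=
      (Finset.sum_add_sum_compl S y).symm
    have hS : ∑ i ∈ S, y i ≤ 1.2 * ε * y i0 := by
      calc ∑ i ∈ S, y i ≤ ∑ _i ∈ S, 1.2 * (ε / m) * y i0 :=
            Finset.sum_le_sum fun i hi => hMsup ▸ ha i hi
        _ = S.card * (1.2 * (ε / m) * y i0) := by
            rw [Finset.sum_const, nsmul_eq_mul]
        _ ≤ m * (1.2 * (ε / m) * y i0) := by
            apply mul_le_mul_of_nonneg_right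
            · exact_mod_cast (Finset.card_le_univ S).trans_eq (Fintype.card_fin m)
            · positivity
        _ = 1.2 * ε * y i0 := by field_simp
    have hMT : y i0 ≤ ∑ i ∈ Sᶜ, y i :=
      Finset.single_le_sum (fun i _ => hy i) (Finset.mem_compl.mpr hcase)
    have hT0 : 0 ≤ ∑ i ∈ Sᶜ, y i := Finset.sum_nonneg fun i _ => hy i
    have hT : (1 - 1.2 * ε) * (∑ i ∈ Sᶜ, y i) ≤ ∑ i, y i * ∑ j, A i j * x j := by
      rw [← Finset.sum_add_sum_compl S (fun i => y i * ∑ j, A i j * x j)]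
      have h1 : 0 ≤ ∑ i ∈ S, y i * ∑ j, A i j * x j :=
        Finset.sum_nonneg fun i _ => mul_nonneg (hy i)
          (Finset.sum_nonneg fun j _ => mul_nonneg (hA i j) (hx j))
      have h2 : (1 - 1.2 * ε) * (∑ i ∈ Sᶜ, y i) ≤ ∑ i ∈ Sᶜ, y i * ∑ j, A i j * x j := by
        rw [Finset.mul_sum]
        apply Finset.sum_le_sum
        intro i hi
        rw [mul_comm]
        exact mul_le_mul_of_nonneg_left (hb i (Finset.mem_compl.mp hi)) (hy i)
      linarith
    have hε' : (0:ℝ) ≤ 1 + 3 * ε := by linarith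
    nlinarith [mul_le_mul_of_nonneg_left hT hε',
      mul_le_mul_of_nonneg_left hMT (by linarith : (0:ℝ) ≤ 1.2 * ε),
      mul_nonneg (by linarith : (0:ℝ) ≤ 1/6 - ε) hT0,
      mul_nonneg hε0.le hT0]
end
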